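/- For every α ≥ 2, the vector (2, 2, ..., 2) of length α (all entries 2) is uniquely 0-realized by the path P_{2α}: P_{2α} is a tp0 cop-win graph with this rank cardinality vector, and every tp0 cop-win graph with this rank cardinality vector is isomorphic to P_{2α}. -/

import Mathlib

namespace CopsRobbers

variable {V : Type*}

/-- The closed neighborhood of `v` within the vertex set `S` (graphs are reflexive,
so `v` itself belongs to its closed neighborhood). -/
def closedNbhd (G : SimpleGraph V) (S : Set V) (v : V) : Set V :=
  {u | u ∈ S ∧ (u = v ∨ G.Adj u v)}

/-- `v` is a strict corner of the subgraph induced on `S`: some other vertex `w ∈ S`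
strictly corners `v`, i.e. `N[v] ⊊ N[w]` within `S`. -/
def StrictCorner (G : SimpleGraph V) (S : Set V) (v : V) : Prop :=
  v ∈ S ∧ ∃ w ∈ S, w ≠ v ∧ closedNbhd G S v ⊂ closedNbhd G S w

/-- The remaining vertex sets of the corner ranking procedure (0-indexed auxiliary
version): at each step all current strict corners are removed. -/
def stageAux (G : SimpleGraph V) : ℕ → Set V
  | 0 => Set.univ
  | n + 1 => stageAux G n \ {v | StrictCorner G (stageAux G n) v}

/-- `stage G k` is the vertex set of `G^(k)` (for `k ≥ 1`), so `stage G 1 = V(G)`. -/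
def stage (G : SimpleGraph V) (k : ℕ) : Set V := stageAux G (k - 1)

/-- The corner rank of a vertex: the least `k ≥ 1` such that `v` is a strict corner
of `G^(k)`, or `G^(k)` is a clique still containing `v`; and `⊤` (that is, `∞`) if
there is no such `k`. -/
noncomputable def cornerRank (G : SimpleGraph V) (v : V) : ℕ∞ :=
  sInf {k : ℕ∞ | ∃ n : ℕ, k = (n : ℕ∞) ∧ 1 ≤ n ∧
    (StrictCorner G (stage G n) v ∨ (G.IsClique (stage G n) ∧ v ∈ stage G n))}

/-- The corner rank of a graph: the largest corner rank of a vertex. -/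
noncomputable def graphRank (G : SimpleGraph V) : ℕ∞ := ⨆ v, cornerRank G v

/-- A graph is cop-win iff every vertex has finite corner rank. -/
def CopWin (G : SimpleGraph V) : Prop := ∀ v, cornerRank G v ≠ ⊤

/-- `v` dominates the set `S`: `v` is (reflexively) adjacent to every vertex of `S`. -/
def Dominates (G : SimpleGraph V) (v : V) (S : Set V) : Prop :=
  ∀ u ∈ S, u = v ∨ G.Adj v u

/-- A cop-win graph of corner rank `α ≥ 2` is `tp1` if some vertex of corner rank `α`
dominates the vertex set of `G^(α-1)`. -/
def Tp1 (G : SimpleGraph V) : Prop :=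
  ∃ α : ℕ, 2 ≤ α ∧ graphRank G = (α : ℕ∞) ∧
    ∃ v, cornerRank G v = (α : ℕ∞) ∧ Dominates G v (stage G (α - 1))

/-- `G` realizes the vector `(x_α, …, x_1)` (written as the list `[x_α, …, x_1]`):
`G` is cop-win of corner rank `α` and for each `k`, `x_k` is the number of vertices
of corner rank `k`. -/
def Realizes (G : SimpleGraph V) (x : List ℕ) : Prop :=
  CopWin G ∧ graphRank G = (x.length : ℕ∞) ∧
  ∀ i : Fin x.length,
    x.get i = {v | cornerRank G v = ((x.length - (i : ℕ) : ℕ) : ℕ∞)}.ncard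

/-- `G` r-realizes `x` (for `r ∈ {0,1}`): `G` realizes `x` and `G` is tp-r. -/
def RRealizes (G : SimpleGraph V) (r : ℕ) (x : List ℕ) : Prop :=
  Realizes G x ∧ (Tp1 G ↔ r = 1)

/-- A vector is realizable if it is the rank cardinality vector of some finite cop-win graph. -/
def Realizable (x : List ℕ) : Prop :=
  ∃ (W : Type) (_ : Fintype W) (G : SimpleGraph W), Realizes G x

/-- A vector is r-realizable if some finite tp-r cop-win graph realizes it. -/
def RRealizable (r : ℕ) (x : List ℕ) : Prop :=
  ∃ (W : Type) (_ : Fintype W) (G : SimpleGraph W), RRealizes G r x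

open Classical in
/-- The capture time of a cop-win graph: `cr(G) - r(G)`. -/
noncomputable def captureTime (G : SimpleGraph V) : ℕ :=
  (graphRank G).toNat - (if Tp1 G then 1 else 0)

end CopsRobbers
namespace CopsRobbers

variable {W : Type*}

/-- A labeling of the set `S` as a path with `n` vertices (within `G`). -/
def IsPathLabeling (G : SimpleGraph W) (S : Set W) {n : ℕ} (u : Fin n → W) : Prop :=
  Function.Injective u ∧ Set.range u = S ∧
    ∀ i j : Fin n, G.Adj (u i) (u j) ↔ (i.val + 1 = j.val ∨ j.val + 1 = i.val)

lemma closedNbhd_subset (G : SimpleGraph W) (S : Set W) (v : W) :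
    closedNbhd G S v ⊆ S := fun _ h => h.1

lemma mem_closedNbhd_self (G : SimpleGraph W) {S : Set W} {v : W} (hv : v ∈ S) :
    v ∈ closedNbhd G S v := ⟨hv, Or.inl rfl⟩

/-- The set of candidate ranks of a vertex. -/
def rankSet (G : SimpleGraph W) (v : W) : Set ℕ∞ :=
  {k : ℕ∞ | ∃ n : ℕ, k = (n : ℕ∞) ∧ 1 ≤ n ∧
    (StrictCorner G (stage G n) v ∨ (G.IsClique (stage G n) ∧ v ∈ stage G n))}

lemma cornerRank_def' (G : SimpleGraph W) (v : W) :
    cornerRank G v = sInf (rankSet G v) := rfl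

lemma one_le_cornerRank (G : SimpleGraph W) (v : W) : 1 ≤ cornerRank G v := by
  refine le_sInf ?_
  rintro k ⟨n, rfl, hn, -⟩
  exact_mod_cast hn

lemma cornerRank_mem (G : SimpleGraph W) (v : W) (h : cornerRank G v ≠ ⊤) :
    cornerRank G v ∈ rankSet G v := by
  rw [cornerRank_def']
  apply csInf_mem
  by_contra hne
  rw [Set.not_nonempty_iff_eq_empty] at hne
  rw [cornerRank_def', hne] at h
  simp at h

lemma cornerRank_le_of_mem {G : SimpleGraph W} {v : W} {k : ℕ∞}
    (h : k ∈ rankSet G v) : cornerRank G v ≤ k := sInf_le h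

/-- characterization of `cornerRank = k` for a natural `k ≥ 1`. -/
lemma cornerRank_eq_iff {G : SimpleGraph W} {v : W} {k : ℕ} (hk : 1 ≤ k) :
    cornerRank G v = (k : ℕ∞) ↔
      ((StrictCorner G (stage G k) v ∨ (G.IsClique (stage G k) ∧ v ∈ stage G k)) ∧
        ∀ m : ℕ, 1 ≤ m → m < k →
          ¬(StrictCorner G (stage G m) v ∨ (G.IsClique (stage G m) ∧ v ∈ stage G m))) := by
  constructor
  · intro h
    have hmem : cornerRank G v ∈ rankSet G v := cornerRank_mem G v (by simp [h])
    rw [h] at hmem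
    obtain ⟨n, hn, hn1, hP⟩ := hmem
    have : n = k := by exact_mod_cast hn.symm
    subst this
    refine ⟨hP, fun m hm1 hmk hPm => ?_⟩
    have : cornerRank G v ≤ (m : ℕ∞) := cornerRank_le_of_mem ⟨m, rfl, hm1, hPm⟩
    rw [h] at this
    exact absurd (by exact_mod_cast this) (by omega)
  · rintro ⟨hP, hmin⟩
    refine le_antisymm (cornerRank_le_of_mem ⟨k, rfl, hk, hP⟩) ?_
    refine le_sInf ?_
    rintro x ⟨m, rfl, hm1, hPm⟩
    by_contra hlt
    push_neg at hlt
    have hmk : m < k := by exact_mod_cast hlt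
    exact hmin m hm1 hmk hPm

lemma stage_one (G : SimpleGraph W) : stage G 1 = Set.univ := rfl

lemma stage_succ (G : SimpleGraph W) (k : ℕ) (hk : 1 ≤ k) :
    stage G (k + 1) = stage G k \ {v | StrictCorner G (stage G k) v} := by
  have : k + 1 - 1 = (k - 1) + 1 := by omega
  rw [stage, this, stageAux]
  rfl

/-- in a clique there are no strict corners. -/
lemma isClique_no_strictCorner {G : SimpleGraph W} {S : Set W} (h : G.IsClique S)
    (v : W) : ¬ StrictCorner G S v := by
  rintro ⟨hv, w, hw, hwv, hss⟩
  have h1 : closedNbhd G S v = S := by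
    apply Set.Subset.antisymm (closedNbhd_subset G S v)
    intro x hx
    refine ⟨hx, ?_⟩
    by_cases hxv : x = v
    · exact Or.inl hxv
    · exact Or.inr (h hx hv hxv)
  have h2 : closedNbhd G S w = S := by
    apply Set.Subset.antisymm (closedNbhd_subset G S w)
    intro x hx
    refine ⟨hx, ?_⟩
    by_cases hxw : x = w
    · exact Or.inl hxw
    · exact Or.inr (h hx hw hxw)
  rw [h1, h2] at hss
  exact hss.ne rfl

end CopsRobbers
namespace CopsRobbers

variable {W : Type*}

section Step

/-- Context for the inductive step: `T` carries a path labeling `u`, `S = T ∪ {c,d}`,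
and the strict corners of `S` are exactly `c` and `d`. -/
structure StepCtx (G : SimpleGraph W) (T : Set W) {n : ℕ} (u : Fin n → W)
    (c d : W) (S : Set W) : Prop where
  inj : Function.Injective u
  rng : Set.range u = T
  adj : ∀ i j : Fin n, G.Adj (u i) (u j) ↔ (i.val + 1 = j.val ∨ j.val + 1 = i.val)
  hc : c ∉ T
  hd : d ∉ T
  hcd : c ≠ d
  hS : S = T ∪ {c, d}
  hcor : ∀ v, StrictCorner G S v ↔ (v = c ∨ v = d)

variable {G : SimpleGraph W} {T : Set W} {n : ℕ} {u : Fin n → W} {c d : W} {S : Set W}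

namespace StepCtx

lemma u_mem_T (ctx : StepCtx G T u c d S) (i : Fin n) : u i ∈ T :=
  ctx.rng ▸ Set.mem_range_self i

lemma u_ne_c (ctx : StepCtx G T u c d S) (i : Fin n) : u i ≠ c :=
  fun h => ctx.hc (h ▸ ctx.u_mem_T i)

lemma u_ne_d (ctx : StepCtx G T u c d S) (i : Fin n) : u i ≠ d :=
  fun h => ctx.hd (h ▸ ctx.u_mem_T i)

lemma u_mem_S (ctx : StepCtx G T u c d S) (i : Fin n) : u i ∈ S := by
  rw [ctx.hS]; exact Or.inl (ctx.u_mem_T i)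

lemma c_mem_S (ctx : StepCtx G T u c d S) : c ∈ S := by
  rw [ctx.hS]; exact Or.inr (by simp)

lemma d_mem_S (ctx : StepCtx G T u c d S) : d ∈ S := by
  rw [ctx.hS]; exact Or.inr (by simp)

lemma mem_S_cases (ctx : StepCtx G T u c d S) {z : W} (hz : z ∈ S) :
    (∃ j, z = u j) ∨ z = c ∨ z = d := by
  rw [ctx.hS] at hz
  rcases hz with h | h
  · rw [← ctx.rng] at h; obtain ⟨j, hj⟩ := h; exact Or.inl ⟨j, hj.symm⟩
  · rcases h with h | h
    · exact Or.inr (Or.inl h)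
    · exact Or.inr (Or.inr h)

lemma u_inj_iff (ctx : StepCtx G T u c d S) {i j : Fin n} : u i = u j ↔ i = j :=
  ⟨fun h => ctx.inj h, fun h => h ▸ rfl⟩

lemma swap (ctx : StepCtx G T u c d S) : StepCtx G T u d c S where
  inj := ctx.inj
  rng := ctx.rng
  adj := ctx.adj
  hc := ctx.hd
  hd := ctx.hc
  hcd := ctx.hcd.symm
  hS := by rw [ctx.hS, Set.pair_comm]
  hcor := fun v => by rw [ctx.hcor v, or_comm]

lemma rev (ctx : StepCtx G T u c d S) : StepCtx G T (u ∘ Fin.rev) c d S where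
  inj := ctx.inj.comp Fin.rev_injective
  rng := by rw [Set.range_comp, Fin.rev_surjective.range_eq, Set.image_univ, ctx.rng]
  adj := by
    intro i j
    rw [Function.comp_apply, Function.comp_apply, ctx.adj]
    have hi : i.val < n := i.isLt
    have hj : j.val < n := j.isLt
    rw [Fin.val_rev, Fin.val_rev]
    omega
  hc := ctx.hc
  hd := ctx.hd
  hcd := ctx.hcd
  hS := ctx.hS
  hcor := ctx.hcor

lemma not_corner_u (ctx : StepCtx G T u c d S) (i : Fin n) : ¬ StrictCorner G S (u i) := by
  rw [ctx.hcor]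
  rintro (h | h)
  · exact ctx.u_ne_c i h
  · exact ctx.u_ne_d i h

lemma corner_c (ctx : StepCtx G T u c d S) : StrictCorner G S c := (ctx.hcor c).2 (Or.inl rfl)

end StepCtx

end Step

end CopsRobbers
namespace CopsRobbers

variable {W : Type*}

lemma mem_closedNbhd {G : SimpleGraph W} {S : Set W} {x v : W} :
    x ∈ closedNbhd G S v ↔ x ∈ S ∧ (x = v ∨ G.Adj x v) := Iff.rfl

section Step

variable {G : SimpleGraph W} {T : Set W} {n : ℕ} {u : Fin n → W} {c d : W} {S : Set W}

namespace StepCtx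

lemma u_mem_N_u (ctx : StepCtx G T u c d S) {i j : Fin n} :
    u i ∈ closedNbhd G S (u j) ↔
      (i.val = j.val ∨ i.val + 1 = j.val ∨ j.val + 1 = i.val) := by
  rw [mem_closedNbhd, ctx.adj, ctx.u_inj_iff, Fin.ext_iff]
  exact ⟨fun h => h.2, fun h => ⟨ctx.u_mem_S i, h⟩⟩

lemma c_mem_N_u (ctx : StepCtx G T u c d S) {i : Fin n} :
    c ∈ closedNbhd G S (u i) ↔ G.Adj c (u i) := by
  rw [mem_closedNbhd]
  constructor
  · rintro ⟨-, h | h⟩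
    · exact absurd h.symm (ctx.u_ne_c i)
    · exact h
  · exact fun h => ⟨ctx.c_mem_S, Or.inr h⟩

lemma d_mem_N_u (ctx : StepCtx G T u c d S) {i : Fin n} :
    d ∈ closedNbhd G S (u i) ↔ G.Adj d (u i) := ctx.swap.c_mem_N_u

lemma u_mem_N_c (ctx : StepCtx G T u c d S) {i : Fin n} :
    u i ∈ closedNbhd G S c ↔ G.Adj c (u i) := by
  rw [mem_closedNbhd, G.adj_comm]
  constructor
  · rintro ⟨-, h | h⟩
    · exact absurd h (ctx.u_ne_c i)
    · exact h
  · exact fun h => ⟨ctx.u_mem_S i, Or.inr h⟩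

lemma u_mem_N_d (ctx : StepCtx G T u c d S) {i : Fin n} :
    u i ∈ closedNbhd G S d ↔ G.Adj d (u i) := ctx.swap.u_mem_N_c

lemma d_mem_N_c (ctx : StepCtx G T u c d S) :
    d ∈ closedNbhd G S c ↔ G.Adj c d := by
  rw [mem_closedNbhd, G.adj_comm]
  constructor
  · rintro ⟨-, h | h⟩
    · exact absurd h ctx.hcd.symm
    · exact h
  · exact fun h => ⟨ctx.d_mem_S, Or.inr h⟩

lemma c_mem_N_c (ctx : StepCtx G T u c d S) : c ∈ closedNbhd G S c :=
  ⟨ctx.c_mem_S, Or.inl rfl⟩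

/-- Protection at the left end: some `x ∈ {c,d}` is adjacent to `u 0` but not `u 1`. -/
lemma prot (ctx : StepCtx G T u c d S) (hn : 3 ≤ n) :
    (G.Adj c (u ⟨0, by omega⟩) ∧ ¬ G.Adj c (u ⟨1, by omega⟩)) ∨
    (G.Adj d (u ⟨0, by omega⟩) ∧ ¬ G.Adj d (u ⟨1, by omega⟩)) := by
  by_contra hcon
  push_neg at hcon
  obtain ⟨hcc, hdd⟩ := hcon
  apply ctx.not_corner_u ⟨0, by omega⟩
  refine ⟨ctx.u_mem_S _, u ⟨1, by omega⟩, ctx.u_mem_S _, ?_, ?_, ?_⟩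
  · rw [Ne, ctx.u_inj_iff, Fin.ext_iff]
    simp
  · -- subset
    intro z hz
    rcases ctx.mem_S_cases (hz.1 : z ∈ S) with ⟨j, rfl⟩ | rfl | rfl
    · rw [ctx.u_mem_N_u] at hz ⊢
      show j.val = 1 ∨ j.val + 1 = 1 ∨ 1 + 1 = j.val
      have : j.val = 0 ∨ j.val + 1 = 0 ∨ 0 + 1 = j.val := hz
      omega
    · rw [ctx.c_mem_N_u] at hz ⊢
      exact hcc hz
    · rw [ctx.d_mem_N_u] at hz ⊢
      exact hdd hz
  · -- not superset: u 2 is a witness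
    intro hsup
    have h2 : u ⟨2, by omega⟩ ∈ closedNbhd G S (u ⟨1, by omega⟩) := by
      rw [ctx.u_mem_N_u]
      right; right; rfl
    have h3 := hsup h2
    rw [ctx.u_mem_N_u] at h3
    have : (2 : ℕ) = 0 ∨ (2 : ℕ) + 1 = 0 ∨ (0 : ℕ) + 1 = 2 := h3
    omega

/-- Locating the cornerer of `c`, given `c ~ u 0` and `c ≁ u 1`. -/
lemma corner_loc (ctx : StepCtx G T u c d S) (hn : 3 ≤ n)
    (h0 : G.Adj c (u ⟨0, by omega⟩)) (h1 : ¬ G.Adj c (u ⟨1, by omega⟩)) :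
    closedNbhd G S c ⊂ closedNbhd G S (u ⟨0, by omega⟩) ∨
    (G.Adj c d ∧ closedNbhd G S c ⊂ closedNbhd G S d) := by
  obtain ⟨-, w, hwS, hwne, hss⟩ := ctx.corner_c
  rcases ctx.mem_S_cases hwS with ⟨j, rfl⟩ | rfl | hwd
  · -- w = u j : show j = 0
    have hcj : G.Adj c (u j) := by
      have := hss.1 ctx.c_mem_N_c
      rwa [ctx.c_mem_N_u] at this
    have hu0 : u ⟨0, by omega⟩ ∈ closedNbhd G S c := by
      rw [ctx.u_mem_N_c]; exact h0
    have h3 := hss.1 hu0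
    rw [ctx.u_mem_N_u] at h3
    have h4 : (0 : ℕ) = j.val ∨ (0 : ℕ) + 1 = j.val ∨ j.val + 1 = 0 := h3
    have hj : j.val = 0 ∨ j.val = 1 := by omega
    rcases hj with hj | hj
    · left
      have : j = ⟨0, by omega⟩ := Fin.ext hj
      rwa [this] at hss
    · exfalso
      have : j = ⟨1, by omega⟩ := Fin.ext hj
      rw [this] at hcj
      exact h1 hcj
  · exact absurd rfl hwne
  · rw [hwd] at hss
    right
    have hcd : G.Adj c d := by
      have := hss.1 ctx.c_mem_N_c
      rw [mem_closedNbhd] at this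
      rcases this.2 with h | h
      · exact absurd h ctx.hcd
      · exact h
    exact ⟨hcd, hss⟩

end StepCtx

end Step

end CopsRobbers
namespace CopsRobbers

variable {W : Type*}

section Step

variable {G : SimpleGraph W} {T : Set W} {n : ℕ} {u : Fin n → W} {c d : W} {S : Set W}

lemma comp_rev_apply (u : Fin n → W) (k : ℕ) (hk : k < n) :
    (u ∘ Fin.rev) ⟨k, hk⟩ = u ⟨n - 1 - k, by omega⟩ := by
  simp only [Function.comp_apply]
  congr 1
  apply Fin.ext
  rw [Fin.val_rev]
  show n - (k + 1) = n - 1 - k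
  omega

namespace StepCtx

/-- If `c ~ d`, `c ~ u 0`, `d ~ u 0`, `d ~ u 1` and `d ~ u (n-1)`, then `u 0`
is strictly cornered by `d`, contradiction. -/
lemma corner_by_dom (ctx : StepCtx G T u c d S) (hn : 3 ≤ n) (hcd : G.Adj c d)
    (hc0 : G.Adj c (u ⟨0, by omega⟩)) (hd0 : G.Adj d (u ⟨0, by omega⟩))
    (hd1 : G.Adj d (u ⟨1, by omega⟩)) (hdn : G.Adj d (u ⟨n - 1, by omega⟩)) : False := by
  apply ctx.not_corner_u ⟨0, by omega⟩
  refine ⟨ctx.u_mem_S _, d, ctx.d_mem_S, Ne.symm (ctx.u_ne_d _), ?_, ?_⟩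
  · intro z hz
    rcases ctx.mem_S_cases (hz.1 : z ∈ S) with ⟨j, rfl⟩ | rfl | rfl
    · rw [ctx.u_mem_N_u] at hz
      have hj : j.val = 0 ∨ j.val + 1 = 0 ∨ 0 + 1 = j.val := hz
      rw [ctx.u_mem_N_d]
      rcases hj with h | h | h
      · have : j = (⟨0, by omega⟩ : Fin n) := Fin.ext h
        rw [this]; exact hd0
      · omega
      · have : j = (⟨1, by omega⟩ : Fin n) := Fin.ext h.symm
        rw [this]; exact hd1
    · exact ⟨ctx.c_mem_S, Or.inr hcd⟩
    · exact ⟨ctx.d_mem_S, Or.inl rfl⟩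
  · intro hsup
    have hmem : u ⟨n - 1, by omega⟩ ∈ closedNbhd G S d := (ctx.u_mem_N_d).2 hdn
    have h3 := hsup hmem
    rw [ctx.u_mem_N_u] at h3
    have : (n - 1 : ℕ) = 0 ∨ (n - 1) + 1 = 0 ∨ 0 + 1 = n - 1 := h3
    omega

/-- Two-sided protection by the same vertex `c` is impossible. -/
lemma same_prot_contra (ctx : StepCtx G T u c d S) (hn : 3 ≤ n)
    (h0 : G.Adj c (u ⟨0, by omega⟩)) (h1 : ¬ G.Adj c (u ⟨1, by omega⟩))
    (h2 : G.Adj c (u ⟨n - 1, by omega⟩)) (h3 : ¬ G.Adj c (u ⟨n - 2, by omega⟩)) :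
    False := by
  rcases ctx.corner_loc hn h0 h1 with hss | ⟨hcd, hss⟩
  · have hmem := hss.1 ((ctx.u_mem_N_c).2 h2)
    rw [ctx.u_mem_N_u] at hmem
    have : (n - 1 : ℕ) = 0 ∨ (n - 1) + 1 = 0 ∨ 0 + 1 = n - 1 := hmem
    omega
  · have hd0 : G.Adj d (u ⟨0, by omega⟩) := by
      have := hss.1 ((ctx.u_mem_N_c).2 h0)
      rwa [ctx.u_mem_N_d] at this
    have hdn : G.Adj d (u ⟨n - 1, by omega⟩) := by
      have := hss.1 ((ctx.u_mem_N_c).2 h2)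
      rwa [ctx.u_mem_N_d] at this
    have hd1 : ¬ G.Adj d (u ⟨1, by omega⟩) := fun h =>
      ctx.corner_by_dom hn hcd h0 hd0 h hdn
    have hdn2 : ¬ G.Adj d (u ⟨n - 2, by omega⟩) := by
      intro h
      have e1 : (⟨n - 1 - 0, by omega⟩ : Fin n) = ⟨n - 1, by omega⟩ := by simp only [Fin.mk.injEq]; omega
      have e2 : (⟨n - 1 - 1, by omega⟩ : Fin n) = ⟨n - 2, by omega⟩ := by simp only [Fin.mk.injEq]; omega
      have e3 : (⟨n - 1 - (n - 1), by omega⟩ : Fin n) = ⟨0, by omega⟩ := by simp only [Fin.mk.injEq]; omega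
      apply ctx.rev.corner_by_dom hn hcd
      · rw [comp_rev_apply u 0 (by omega), e1]; exact h2
      · rw [comp_rev_apply u 0 (by omega), e1]; exact hdn
      · rw [comp_rev_apply u 1 (by omega), e2]; exact h
      · rw [comp_rev_apply u (n - 1) (by omega), e3]; exact hd0
    rcases ctx.swap.corner_loc hn hd0 hd1 with hss2 | ⟨-, hss2⟩
    · have hmem := hss2.1 ((ctx.u_mem_N_d).2 hdn)
      rw [ctx.u_mem_N_u] at hmem
      have : (n - 1 : ℕ) = 0 ∨ (n - 1) + 1 = 0 ∨ 0 + 1 = n - 1 := hmem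
      omega
    · exact ssubset_irrefl _ (hss.trans hss2)

end StepCtx

end Step

end CopsRobbers
namespace CopsRobbers

variable {W : Type*}

section Step

variable {G : SimpleGraph W} {T : Set W} {n : ℕ} {u : Fin n → W} {c d : W} {S : Set W}

namespace StepCtx

/-- The right-end version of `corner_loc`, for `d`. -/
lemma corner_loc_right (ctx : StepCtx G T u c d S) (hn : 3 ≤ n)
    (h0 : G.Adj d (u ⟨n - 1, by omega⟩)) (h1 : ¬ G.Adj d (u ⟨n - 2, by omega⟩)) :
    closedNbhd G S d ⊂ closedNbhd G S (u ⟨n - 1, by omega⟩) ∨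
    (G.Adj d c ∧ closedNbhd G S d ⊂ closedNbhd G S c) := by
  have e1 : (⟨n - 1 - 0, by omega⟩ : Fin n) = (⟨n - 1, by omega⟩ : Fin n) := by
    simp only [Fin.mk.injEq]; omega
  have e2 : (⟨n - 1 - 1, by omega⟩ : Fin n) = (⟨n - 2, by omega⟩ : Fin n) := by
    simp only [Fin.mk.injEq]; omega
  have := ctx.swap.rev.corner_loc hn (h0 := ?_) (h1 := ?_)
  · rcases this with hss | hss
    · left
      rwa [comp_rev_apply u 0 (by omega), e1] at hss
    · right; exact hss
  · rw [comp_rev_apply u 0 (by omega), e1]; exact h0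
  · rw [comp_rev_apply u 1 (by omega), e2]; exact h1

/-- The main case: `c` protects the left end, `d` the right end. Then `c` is adjacent
exactly to `u 0`, `d` exactly to `u (n-1)`, and `c ≁ d`. -/
lemma main_case (ctx : StepCtx G T u c d S) (hn : 3 ≤ n)
    (hc0 : G.Adj c (u ⟨0, by omega⟩)) (hc1 : ¬ G.Adj c (u ⟨1, by omega⟩))
    (hd0 : G.Adj d (u ⟨n - 1, by omega⟩)) (hd1 : ¬ G.Adj d (u ⟨n - 2, by omega⟩)) :
    (∀ i : Fin n, G.Adj c (u i) ↔ i.val = 0) ∧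
    (∀ i : Fin n, G.Adj d (u i) ↔ i.val = n - 1) ∧ ¬ G.Adj c d := by
  rcases ctx.corner_loc hn hc0 hc1 with hss | ⟨hcd, hss⟩
  · -- N(c) ⊂ N(u 0)
    have hA : ∀ i : Fin n, G.Adj c (u i) ↔ i.val = 0 := by
      intro i
      constructor
      · intro h
        have hmem := hss.1 ((ctx.u_mem_N_c).2 h)
        rw [ctx.u_mem_N_u] at hmem
        have h4 : i.val = 0 ∨ i.val + 1 = 0 ∨ 0 + 1 = i.val := hmem
        have hi : i.val = 0 ∨ i.val = 1 := by omega
        rcases hi with hi | hi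
        · exact hi
        · exfalso
          have hi1 : i = (⟨1, by omega⟩ : Fin n) := Fin.ext hi
          rw [hi1] at h
          exact hc1 h
      · intro h
        have : i = (⟨0, by omega⟩ : Fin n) := Fin.ext h
        rw [this]; exact hc0
    have hncd : ¬ G.Adj c d := by
      intro hcd
      have hdu0 : G.Adj d (u ⟨0, by omega⟩) := by
        have := hss.1 ((ctx.d_mem_N_c).2 hcd)
        rwa [ctx.d_mem_N_u] at this
      rcases ctx.corner_loc_right hn hd0 hd1 with hss2 | ⟨hdc, hss2⟩
      · have hmem := hss2.1 ⟨ctx.c_mem_S, Or.inr hcd⟩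
        rw [ctx.c_mem_N_u] at hmem
        have := (hA _).1 hmem
        simp only [Fin.val_mk] at this
        omega
      · have hmem := hss2.1 ((ctx.u_mem_N_d).2 hd0)
        rw [ctx.u_mem_N_c] at hmem
        have := (hA _).1 hmem
        simp only [Fin.val_mk] at this
        omega
    have hB : ∀ i : Fin n, G.Adj d (u i) ↔ i.val = n - 1 := by
      rcases ctx.corner_loc_right hn hd0 hd1 with hss2 | ⟨hdc, hss2⟩
      · intro i
        constructor
        · intro h
          have hmem := hss2.1 ((ctx.u_mem_N_d).2 h)
          rw [ctx.u_mem_N_u] at hmem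
          have h4 : i.val = n - 1 ∨ i.val + 1 = n - 1 ∨ (n - 1) + 1 = i.val := hmem
          have hi : i.val = n - 1 ∨ i.val = n - 2 := by
            have := i.isLt
            omega
          rcases hi with hi | hi
          · exact hi
          · exfalso
            have hi1 : i = (⟨n - 2, by omega⟩ : Fin n) := Fin.ext hi
            rw [hi1] at h
            exact hd1 h
        · intro h
          have : i = (⟨n - 1, by omega⟩ : Fin n) := Fin.ext h
          rw [this]; exact hd0
      · exact absurd hdc.symm hncd
    exact ⟨hA, hB, hncd⟩
  · -- N(c) ⊂ N(d) : impossible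
    exfalso
    have hdu0 : G.Adj d (u ⟨0, by omega⟩) := by
      have := hss.1 ((ctx.u_mem_N_c).2 hc0)
      rwa [ctx.u_mem_N_d] at this
    rcases ctx.corner_loc_right hn hd0 hd1 with hss2 | ⟨hdc, hss2⟩
    · have hmem := hss2.1 ((ctx.u_mem_N_d).2 hdu0)
      rw [ctx.u_mem_N_u] at hmem
      have : (0 : ℕ) = n - 1 ∨ (0 : ℕ) + 1 = n - 1 ∨ (n - 1) + 1 = 0 := hmem
      omega
    · exact ssubset_irrefl _ (hss.trans hss2)

end StepCtx

end Step

end CopsRobbers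
namespace CopsRobbers

variable {W : Type*}

section Step

variable {G : SimpleGraph W} {T : Set W} {n : ℕ} {u : Fin n → W} {c d : W} {S : Set W}

namespace StepCtx

/-- Given the exact adjacency structure, build the extended path labeling of `S`. -/
lemma build (ctx : StepCtx G T u c d S) (hn : 2 ≤ n)
    (hA : ∀ i : Fin n, G.Adj c (u i) ↔ i.val = 0)
    (hB : ∀ i : Fin n, G.Adj d (u i) ↔ i.val = n - 1)
    (he : ¬ G.Adj c d) :
    ∃ w : Fin (n + 2) → W, IsPathLabeling G S w := by
  refine ⟨fun i => if h0 : i.val = 0 then c else if hL : i.val = n + 1 then d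
    else u ⟨i.val - 1, by omega⟩, ?_, ?_, ?_⟩
  · -- injective
    intro i j hij
    simp only at hij
    apply Fin.ext
    have hi := i.isLt
    have hj := j.isLt
    split_ifs at hij with p1 p2 p3 p4 p5 p6 p7 p8
    all_goals first
      | omega
      | (exact absurd hij ctx.hcd)
      | (exact absurd hij.symm ctx.hcd)
      | (exact absurd hij.symm (ctx.u_ne_c _))
      | (exact absurd hij (ctx.u_ne_c _))
      | (exact absurd hij.symm (ctx.u_ne_d _))
      | (exact absurd hij (ctx.u_ne_d _))
      | (have := ctx.inj hij; rw [Fin.mk.injEq] at this; omega)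
  · -- range
    apply Set.Subset.antisymm
    · rintro z ⟨i, rfl⟩
      simp only
      split_ifs
      · exact ctx.c_mem_S
      · exact ctx.d_mem_S
      · exact ctx.u_mem_S _
    · intro z hz
      rcases ctx.mem_S_cases hz with ⟨j, rfl⟩ | rfl | rfl
      · refine ⟨⟨j.val + 1, by omega⟩, ?_⟩
        have hj := j.isLt
        simp only
        rw [dif_neg (by omega), dif_neg (by omega)]
        exact congrArg u (by apply Fin.ext; show j.val + 1 - 1 = j.val; omega)
      · exact ⟨⟨0, by omega⟩, by simp⟩
      · refine ⟨⟨n + 1, by omega⟩, ?_⟩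
        simp only
        rw [dif_neg (by omega)]
        simp
  · -- adjacency
    intro i j
    have hi := i.isLt
    have hj := j.isLt
    simp only
    split_ifs with p1 p2 p3 p4 p5 p6 p7 p8
    · -- i = 0, j = 0
      constructor
      · intro h; exact absurd h (G.irrefl)
      · intro h; omega
    · -- i = 0, j = n+1
      constructor
      · intro h; exact absurd h he
      · intro h; omega
    · -- i = 0, j mid
      rw [hA]
      simp only [Fin.val_mk]
      omega
    · -- i = n+1, j = 0
      constructor
      · intro h; exact absurd h.symm he
      · intro h; omega
    · -- i = n+1, j = n+1
      constructor
      · intro h; exact absurd h (G.irrefl)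
      · intro h; omega
    · -- i = n+1, j mid
      rw [hB]
      simp only [Fin.val_mk]
      omega
    · -- i mid, j = 0
      rw [G.adj_comm, hA]
      simp only [Fin.val_mk]
      omega
    · -- i mid, j = n+1
      rw [G.adj_comm, hB]
      simp only [Fin.val_mk]
      omega
    · -- i mid, j mid
      rw [ctx.adj]
      simp only [Fin.val_mk]
      omega

end StepCtx

end Step

end CopsRobbers
namespace CopsRobbers

variable {W : Type*}

section Step

variable {G : SimpleGraph W} {T : Set W} {n : ℕ} {u : Fin n → W} {c d : W} {S : Set W}

namespace StepCtx

set_option maxHeartbeats 1000000 in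
lemma prot_right (ctx : StepCtx G T u c d S) (hn : 3 ≤ n) :
    (G.Adj c (u ⟨n - 1, by omega⟩) ∧ ¬ G.Adj c (u ⟨n - 2, by omega⟩)) ∨
    (G.Adj d (u ⟨n - 1, by omega⟩) ∧ ¬ G.Adj d (u ⟨n - 2, by omega⟩)) := by
  have e1 : (⟨n - 1 - 0, by omega⟩ : Fin n) = (⟨n - 1, by omega⟩ : Fin n) := by
    simp only [Fin.mk.injEq]; omega
  have e2 : (⟨n - 1 - 1, by omega⟩ : Fin n) = (⟨n - 2, by omega⟩ : Fin n) := by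
    simp only [Fin.mk.injEq]; omega
  have h := ctx.rev.prot hn
  rcases h with ⟨h1, h2⟩ | ⟨h1, h2⟩
  · left
    rw [comp_rev_apply u 0 (by omega), e1] at h1
    rw [comp_rev_apply u 1 (by omega), e2] at h2
    exact ⟨h1, h2⟩
  · right
    rw [comp_rev_apply u 0 (by omega), e1] at h1
    rw [comp_rev_apply u 1 (by omega), e2] at h2
    exact ⟨h1, h2⟩

/-- The inductive step for `n ≥ 3`. -/
lemma step_extend (ctx : StepCtx G T u c d S) (hn : 3 ≤ n) :
    ∃ w : Fin (n + 2) → W, IsPathLabeling G S w := by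
  rcases ctx.prot hn with ⟨hc0, hc1⟩ | ⟨hd0, hd1⟩
  · rcases ctx.prot_right hn with ⟨hc2, hc3⟩ | ⟨hd2, hd3⟩
    · exact (ctx.same_prot_contra hn hc0 hc1 hc2 hc3).elim
    · obtain ⟨hA, hB, he⟩ := ctx.main_case hn hc0 hc1 hd2 hd3
      exact ctx.build (by omega) hA hB he
  · rcases ctx.prot_right hn with ⟨hc2, hc3⟩ | ⟨hd2, hd3⟩
    · obtain ⟨hA, hB, he⟩ := ctx.swap.main_case hn hd0 hd1 hc2 hc3
      exact ctx.swap.build (by omega) hA hB he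
    · exact (ctx.swap.same_prot_contra hn hd0 hd1 hd2 hd3).elim

/-- In the base case `n = 2`: if some `u i` is adjacent to both `c` and `d` then
it dominates `S`. -/
lemma dom_of (ctx : StepCtx G T u c d S) (hn : n = 2) (i : Fin n)
    (ha : G.Adj c (u i)) (hb : G.Adj d (u i)) : Dominates G (u i) S := by
  intro z hz
  rcases ctx.mem_S_cases hz with ⟨j, rfl⟩ | rfl | rfl
  · by_cases hij : j = i
    · exact Or.inl (hij ▸ rfl)
    · right
      rw [ctx.adj]
      have hi := i.isLt
      have hj := j.isLt
      have hij' : j.val ≠ i.val := fun hh => hij (Fin.ext hh)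
      omega
  · exact Or.inr ha.symm
  · exact Or.inr hb.symm

/-- The base step, using tp0. -/
lemma step_base (ctx : StepCtx G T u c d S) (hn : n = 2)
    (hdom : ∀ i : Fin n, ¬ Dominates G (u i) S) :
    ∃ w : Fin (n + 2) → W, IsPathLabeling G S w := by
  have notdom : ∀ i : Fin n, ¬(G.Adj c (u i) ∧ G.Adj d (u i)) := fun i h =>
    hdom i (ctx.dom_of hn i h.1 h.2)
  obtain ⟨-, w, hwS, hwne, hss⟩ := ctx.corner_c
  rcases ctx.mem_S_cases hwS with ⟨i, rfl⟩ | rfl | hwd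
  · -- c is cornered by u i
    have hai : G.Adj c (u i) := by
      have := hss.1 ctx.c_mem_N_c
      rwa [ctx.c_mem_N_u] at this
    have hbi : ¬ G.Adj d (u i) := fun h => notdom i ⟨hai, h⟩
    have he : ¬ G.Adj c d := by
      intro e
      have := hss.1 ((ctx.d_mem_N_c).2 e)
      rw [ctx.d_mem_N_u] at this
      exact notdom i ⟨hai, this⟩
    -- d is cornered by some u j with j ≠ i
    obtain ⟨-, w', hw'S, hw'ne, hss'⟩ := ctx.swap.corner_c
    rcases ctx.mem_S_cases hw'S with ⟨j, rfl⟩ | hwc | hwd'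
    · have hbj : G.Adj d (u j) := by
        have := hss'.1 ctx.swap.c_mem_N_c
        rwa [ctx.d_mem_N_u] at this
      have haj : ¬ G.Adj c (u j) := fun h => notdom j ⟨h, hbj⟩
      have hij : i.val ≠ j.val := fun h => haj (Fin.ext h ▸ hai)
      -- characterize adjacencies
      have hA : ∀ k : Fin n, G.Adj c (u k) ↔ k = i := by
        intro k
        constructor
        · intro h
          have hk := k.isLt
          have hi2 := i.isLt
          have hj2 := j.isLt
          by_contra hki
          have hki' : k.val ≠ i.val := fun hh => hki (Fin.ext hh)
          have : k = j := by
            apply Fin.ext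
            omega
          rw [this] at h
          exact haj h
        · rintro rfl; exact hai
      have hB : ∀ k : Fin n, G.Adj d (u k) ↔ k = j := by
        intro k
        constructor
        · intro h
          have hk := k.isLt
          have hi2 := i.isLt
          have hj2 := j.isLt
          by_contra hkj
          have hkj' : k.val ≠ j.val := fun hh => hkj (Fin.ext hh)
          have : k = i := by
            apply Fin.ext
            omega
          rw [this] at h
          exact hbi h
        · rintro rfl; exact hbj
      by_cases hi0 : i.val = 0
      · refine ctx.build (by omega) ?_ ?_ he
        · intro k
          rw [hA, Fin.ext_iff, hi0]
        · intro k
          rw [hB, Fin.ext_iff]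
          have : j.val = n - 1 := by
            have hi2 := i.isLt
            have hj2 := j.isLt
            omega
          rw [this]
      · refine ctx.rev.build (by omega) ?_ ?_ he
        · intro k
          rw [Function.comp_apply, hA, Fin.ext_iff, Fin.val_rev]
          have hk := k.isLt
          have hi2 := i.isLt
          omega
        · intro k
          rw [Function.comp_apply, hB, Fin.ext_iff, Fin.val_rev]
          have hk := k.isLt
          have hi2 := i.isLt
          have hj2 := j.isLt
          omega
    · -- d cornered by c : impossible
      exfalso
      rw [hwc] at hss'
      have := hss'.1 ctx.swap.c_mem_N_c
      rw [mem_closedNbhd] at this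
      rcases this.2 with h | h
      · exact ctx.hcd h.symm
      · exact he (h.symm)
    · exact absurd hwd' hw'ne
  · exact absurd rfl hwne
  · -- c is cornered by d
    rw [hwd] at hss hwne
    have he : G.Adj c d := by
      have := hss.1 ctx.c_mem_N_c
      rw [mem_closedNbhd] at this
      rcases this.2 with h | h
      · exact absurd h ctx.hcd
      · exact h
    have hnoc : ∀ i : Fin n, ¬ G.Adj c (u i) := by
      intro i hci
      have := hss.1 ((ctx.u_mem_N_c).2 hci)
      rw [ctx.u_mem_N_d] at this
      exact notdom i ⟨hci, this⟩
    exfalso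
    obtain ⟨-, w', hw'S, hw'ne, hss'⟩ := ctx.swap.corner_c
    rcases ctx.mem_S_cases hw'S with ⟨j, rfl⟩ | hwc | hwd'
    · have : G.Adj c (u j) := by
        have := hss'.1 ⟨ctx.c_mem_S, Or.inr he⟩
        rwa [ctx.c_mem_N_u] at this
      exact hnoc j this
    · rw [hwc] at hss'
      exact ssubset_irrefl _ (hss.trans hss')
    · exact absurd hwd' hw'ne

end StepCtx

end Step

end CopsRobbers
namespace CopsRobbers

variable {W : Type*}

lemma stage_eq_stageAux (G : SimpleGraph W) (k : ℕ) : stage G (k + 1) = stageAux G k := by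
  rw [stage]
  congr 1

section PathRank

/-- The middle segment `[k, 2m-1-k]` of the path. -/
def seg {m : ℕ} (f : Fin (2 * m) → W) (k : ℕ) : Set W :=
  f '' {i | k ≤ i.val ∧ i.val ≤ 2 * m - 1 - k}

/-- A graph which is globally labeled as a path on `2m` vertices. -/
structure PathCtx (G : SimpleGraph W) (m : ℕ) (f : Fin (2 * m) → W) : Prop where
  hm : 2 ≤ m
  inj : Function.Injective f
  rng : Set.range f = Set.univ
  adj : ∀ i j : Fin (2 * m), G.Adj (f i) (f j) ↔ (i.val + 1 = j.val ∨ j.val + 1 = i.val)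

namespace PathCtx

variable {G : SimpleGraph W} {m : ℕ} {f : Fin (2 * m) → W}

lemma f_inj_iff (pc : PathCtx G m f) {i j : Fin (2 * m)} : f i = f j ↔ i.val = j.val := by
  rw [← Fin.ext_iff]
  exact ⟨fun h => pc.inj h, fun h => h ▸ rfl⟩

lemma mem_seg (pc : PathCtx G m f) {i : Fin (2 * m)} {k : ℕ} :
    f i ∈ seg f k ↔ (k ≤ i.val ∧ i.val ≤ 2 * m - 1 - k) := by
  constructor
  · rintro ⟨j, hj, hji⟩
    rwa [← pc.inj hji]
  · intro h
    exact ⟨i, h, rfl⟩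

lemma mem_seg_cases (pc : PathCtx G m f) {z : W} {k : ℕ} (hz : z ∈ seg f k) :
    ∃ i : Fin (2 * m), z = f i ∧ k ≤ i.val ∧ i.val ≤ 2 * m - 1 - k := by
  obtain ⟨i, hi, hif⟩ := hz
  exact ⟨i, hif.symm, hi⟩

lemma exists_label (pc : PathCtx G m f) (z : W) : ∃ i, z = f i := by
  have : z ∈ Set.range f := pc.rng ▸ Set.mem_univ z
  obtain ⟨i, hi⟩ := this
  exact ⟨i, hi.symm⟩

lemma nbhd_seg (pc : PathCtx G m f) {i j : Fin (2 * m)} {k : ℕ} :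
    f j ∈ closedNbhd G (seg f k) (f i) ↔
      ((k ≤ j.val ∧ j.val ≤ 2 * m - 1 - k) ∧
        (j.val = i.val ∨ j.val + 1 = i.val ∨ i.val + 1 = j.val)) := by
  rw [mem_closedNbhd, pc.mem_seg, pc.f_inj_iff, pc.adj]

/-- A generic "endpoint is a strict corner" helper. -/
lemma corner_of (pc : PathCtx G m f) {k p q r : ℕ}
    (hp2m : p < 2 * m) (hq2m : q < 2 * m) (hr2m : r < 2 * m)
    (hp : k ≤ p ∧ p ≤ 2 * m - 1 - k) (hq : k ≤ q ∧ q ≤ 2 * m - 1 - k)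
    (hr : k ≤ r ∧ r ≤ 2 * m - 1 - k)
    (hpq : p + 1 = q ∨ q + 1 = p)
    (hqr : q + 1 = r ∨ r + 1 = q)
    (hpr : ¬(r = p ∨ r + 1 = p ∨ p + 1 = r))
    (hcov : ∀ j : ℕ, j < 2 * m → (k ≤ j ∧ j ≤ 2 * m - 1 - k) →
      (j = p ∨ j + 1 = p ∨ p + 1 = j) → (j = q ∨ j + 1 = q ∨ q + 1 = j)) :
    StrictCorner G (seg f k) (f ⟨p, hp2m⟩) := by
  refine ⟨(pc.mem_seg).2 hp, f ⟨q, hq2m⟩, (pc.mem_seg).2 hq, ?_, ?_, ?_⟩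
  · rw [Ne, pc.f_inj_iff]
    simp only [Fin.val_mk]
    omega
  · intro z hz
    obtain ⟨j, rfl, hj⟩ := pc.mem_seg_cases (closedNbhd_subset G _ _ hz)
    rw [pc.nbhd_seg] at hz ⊢
    have hz2 := hz.2
    simp only [Fin.val_mk] at hz2 ⊢
    exact ⟨hj, hcov j.val j.isLt hj hz2⟩
  · intro hsup
    have hmem : f ⟨r, hr2m⟩ ∈ closedNbhd G (seg f k) (f ⟨q, hq2m⟩) := by
      rw [pc.nbhd_seg]
      simp only [Fin.val_mk]
      exact ⟨hr, by omega⟩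
    have := hsup hmem
    rw [pc.nbhd_seg] at this
    have h2 := this.2
    simp only [Fin.val_mk] at h2
    exact hpr h2

lemma corner_seg_iff (pc : PathCtx G m f) {k : ℕ} (hk : k + 2 ≤ m) (v : W) :
    StrictCorner G (seg f k) v ↔
      (v = f ⟨k, by omega⟩ ∨ v = f ⟨2 * m - 1 - k, by omega⟩) := by
  constructor
  · rintro ⟨hv, w, hwS, hwne, hss⟩
    obtain ⟨i, rfl, hi⟩ := pc.mem_seg_cases hv
    obtain ⟨j, rfl, hj⟩ := pc.mem_seg_cases hwS
    have hji : j.val ≠ i.val := fun h => hwne (pc.f_inj_iff.2 h)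
    -- i is adjacent-or-equal to j
    have hij : i.val = j.val ∨ i.val + 1 = j.val ∨ j.val + 1 = i.val := by
      have := hss.1 ((pc.nbhd_seg).2 ⟨hi, Or.inl rfl⟩)
      rw [pc.nbhd_seg] at this
      exact this.2
    -- suppose i is interior
    by_contra hcon
    push_neg at hcon
    obtain ⟨h1, h2⟩ := hcon
    rw [Ne, pc.f_inj_iff] at h1 h2
    simp only [Fin.val_mk] at h1 h2
    have hil : k + 1 ≤ i.val := by omega
    have hir : i.val ≤ 2 * m - 1 - k - 1 := by
      have := i.isLt
      omega
    -- both neighbours of i lie in the segment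
    have hm1 : f ⟨i.val - 1, by omega⟩ ∈ closedNbhd G (seg f k) (f i) := by
      rw [pc.nbhd_seg]
      refine ⟨by simp only [Fin.val_mk]; omega, ?_⟩
      simp only [Fin.val_mk]
      omega
    have hm2 : f ⟨i.val + 1, by omega⟩ ∈ closedNbhd G (seg f k) (f i) := by
      rw [pc.nbhd_seg]
      exact ⟨by simp only [Fin.val_mk]; omega, Or.inr (Or.inr rfl)⟩
    have hc1 := hss.1 hm1
    have hc2 := hss.1 hm2
    rw [pc.nbhd_seg] at hc1 hc2
    have hc1' := hc1.2
    have hc2' := hc2.2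
    simp only [Fin.val_mk] at hc1' hc2'
    omega
  · rintro (rfl | rfl)
    · apply pc.corner_of (q := k + 1) (r := k + 2) <;> omega
    · apply pc.corner_of (q := 2 * m - 2 - k) (r := 2 * m - 3 - k) <;> omega

lemma clique_top (pc : PathCtx G m f) : G.IsClique (seg f (m - 1)) := by
  have hm := pc.hm
  intro x hx y hy hxy
  obtain ⟨i, rfl, hi⟩ := pc.mem_seg_cases hx
  obtain ⟨j, rfl, hj⟩ := pc.mem_seg_cases hy
  have : i.val ≠ j.val := fun h => hxy (pc.f_inj_iff.2 h)
  rw [pc.adj]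
  omega

lemma not_clique (pc : PathCtx G m f) {k : ℕ} (hk : k + 2 ≤ m) :
    ¬ G.IsClique (seg f k) := by
  intro h
  have h1 : f ⟨k, by omega⟩ ∈ seg f k := (pc.mem_seg).2 (by simp only [Fin.val_mk]; omega)
  have h2 : f ⟨2 * m - 1 - k, by omega⟩ ∈ seg f k :=
    (pc.mem_seg).2 (by simp only [Fin.val_mk]; omega)
  have hne : f (⟨k, by omega⟩ : Fin (2 * m)) ≠ f ⟨2 * m - 1 - k, by omega⟩ := by
    rw [Ne, pc.f_inj_iff]
    simp only [Fin.val_mk]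
    omega
  have := h h1 h2 hne
  rw [pc.adj] at this
  simp only [Fin.val_mk] at this
  omega

lemma seg_zero (pc : PathCtx G m f) : seg f 0 = Set.univ := by
  apply Set.eq_univ_of_forall
  intro z
  obtain ⟨i, rfl⟩ := pc.exists_label z
  rw [pc.mem_seg]
  have := i.isLt
  omega

lemma stageAux_eq (pc : PathCtx G m f) : ∀ k, stageAux G k = seg f (min k (m - 1)) := by
  intro k
  induction k with
  | zero => rw [stageAux, Nat.min_eq_left (by omega), pc.seg_zero]
  | succ k ih =>
    rw [stageAux, ih]
    by_cases hk : k + 1 ≤ m - 1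
    · have hmin : min k (m - 1) = k := by omega
      have hmin2 : min (k + 1) (m - 1) = k + 1 := by omega
      rw [hmin, hmin2]
      ext z
      simp only [Set.mem_diff, Set.mem_setOf_eq]
      constructor
      · rintro ⟨hz, hnc⟩
        obtain ⟨i, rfl, hi⟩ := pc.mem_seg_cases hz
        rw [pc.corner_seg_iff (by omega)] at hnc
        push_neg at hnc
        obtain ⟨hn1, hn2⟩ := hnc
        rw [Ne, pc.f_inj_iff] at hn1 hn2
        simp only [Fin.val_mk] at hn1 hn2
        rw [pc.mem_seg]
        have := i.isLt
        omega
      · intro hz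
        obtain ⟨i, rfl, hi⟩ := pc.mem_seg_cases hz
        have hil := i.isLt
        constructor
        · rw [pc.mem_seg]; omega
        · rw [pc.corner_seg_iff (by omega)]
          push_neg
          constructor <;>
            · rw [Ne, pc.f_inj_iff]
              simp only [Fin.val_mk]
              omega
    · have hmin : min k (m - 1) = m - 1 := by omega
      have hmin2 : min (k + 1) (m - 1) = m - 1 := by omega
      rw [hmin, hmin2]
      have : {v | StrictCorner G (seg f (m - 1)) v} = ∅ := by
        apply Set.eq_empty_of_forall_notMem
        intro v
        exact isClique_no_strictCorner pc.clique_top v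
      rw [this, Set.diff_empty]

lemma stage_eq (pc : PathCtx G m f) (k : ℕ) :
    stage G (k + 1) = seg f (min k (m - 1)) := by
  rw [stage_eq_stageAux, pc.stageAux_eq]

end PathCtx

end PathRank

end CopsRobbers
namespace CopsRobbers

variable {W : Type*}

namespace PathCtx

variable {G : SimpleGraph W} {m : ℕ} {f : Fin (2 * m) → W}

lemma rank_eq (pc : PathCtx G m f) (i : Fin (2 * m)) :
    cornerRank G (f i) = ((min i.val (2 * m - 1 - i.val) + 1 : ℕ) : ℕ∞) := by
  have hm := pc.hm
  have hilt := i.isLt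
  set K := min i.val (2 * m - 1 - i.val) with hKdef
  have hKle1 : K ≤ i.val := min_le_left _ _
  have hKle2 : K ≤ 2 * m - 1 - i.val := min_le_right _ _
  have hKor : K = i.val ∨ K = 2 * m - 1 - i.val := min_choice _ _
  have hKm : K ≤ m - 1 := by omega
  rw [cornerRank_eq_iff (by omega)]
  constructor
  · rw [pc.stage_eq, Nat.min_eq_left hKm]
    by_cases hcase : K + 2 ≤ m
    · left
      rw [pc.corner_seg_iff hcase]
      have hK : i.val = K ∨ i.val = 2 * m - 1 - K := by omega
      rcases hK with h | h
      · left; rw [pc.f_inj_iff]; simp only [Fin.val_mk]; exact h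
      · right; rw [pc.f_inj_iff]; simp only [Fin.val_mk]; exact h
    · right
      have hKm1 : K = m - 1 := by omega
      constructor
      · rw [hKm1]; exact pc.clique_top
      · rw [pc.mem_seg]; omega
  · intro l hl1 hlK
    have hlK' : l ≤ K := by exact_mod_cast Nat.lt_succ_iff.mp hlK
    rintro (hcor | hcl)
    · have hl : l = (l - 1) + 1 := by omega
      rw [hl, pc.stage_eq, Nat.min_eq_left (by omega)] at hcor
      rw [pc.corner_seg_iff (by omega)] at hcor
      rcases hcor with h | h <;>
        · rw [pc.f_inj_iff] at h
          simp only [Fin.val_mk] at h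
          omega
    · have hl : l = (l - 1) + 1 := by omega
      rw [hl, pc.stage_eq, Nat.min_eq_left (by omega)] at hcl
      exact pc.not_clique (by omega) hcl.1

lemma copwin (pc : PathCtx G m f) : CopWin G := by
  intro v
  obtain ⟨i, rfl⟩ := pc.exists_label v
  rw [pc.rank_eq]
  exact ENat.coe_ne_top _

lemma graphRank_eq (pc : PathCtx G m f) : graphRank G = (m : ℕ∞) := by
  have hm := pc.hm
  apply le_antisymm
  · apply iSup_le
    intro v
    obtain ⟨i, rfl⟩ := pc.exists_label v
    rw [pc.rank_eq]
    have h1 : min i.val (2 * m - 1 - i.val) ≤ 2 * m - 1 - i.val := min_le_right _ _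
    have h2 : min i.val (2 * m - 1 - i.val) ≤ i.val := min_le_left _ _
    have hilt := i.isLt
    exact_mod_cast Nat.cast_le.2 (by omega : min i.val (2 * m - 1 - i.val) + 1 ≤ m)
  · have hv : cornerRank G (f ⟨m - 1, by omega⟩) = ((m : ℕ) : ℕ∞) := by
      rw [pc.rank_eq]
      congr 1
      simp only [Fin.val_mk]
      have := min_choice (m - 1) (2 * m - 1 - (m - 1))
      have := min_le_left (m - 1) (2 * m - 1 - (m - 1))
      omega
    rw [← hv]
    exact le_iSup (fun v => cornerRank G v) _

lemma class_eq (pc : PathCtx G m f) {k : ℕ} (hk : k + 1 ≤ m) :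
    {v | cornerRank G v = ((k + 1 : ℕ) : ℕ∞)} =
      {f ⟨k, by omega⟩, f ⟨2 * m - 1 - k, by omega⟩} := by
  have hm := pc.hm
  ext z
  obtain ⟨i, rfl⟩ := pc.exists_label z
  simp only [Set.mem_setOf_eq, Set.mem_insert_iff, Set.mem_singleton_iff]
  rw [pc.rank_eq, pc.f_inj_iff, pc.f_inj_iff]
  simp only [Fin.val_mk]
  rw [Nat.cast_inj]
  have h1 : min i.val (2 * m - 1 - i.val) ≤ 2 * m - 1 - i.val := min_le_right _ _
  have h2 : min i.val (2 * m - 1 - i.val) ≤ i.val := min_le_left _ _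
  have h3 := min_choice i.val (2 * m - 1 - i.val)
  have hilt := i.isLt
  omega

lemma class_ncard (pc : PathCtx G m f) {k : ℕ} (hk : k + 1 ≤ m) :
    {v | cornerRank G v = ((k + 1 : ℕ) : ℕ∞)}.ncard = 2 := by
  have hm := pc.hm
  rw [pc.class_eq hk]
  apply Set.ncard_pair
  rw [Ne, pc.f_inj_iff]
  simp only [Fin.val_mk]
  omega

lemma not_tp1 (pc : PathCtx G m f) : ¬ Tp1 G := by
  have hm := pc.hm
  rintro ⟨α', hα'2, hgr, v, hv, hdom⟩
  rw [pc.graphRank_eq] at hgr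
  have hα'm : m = α' := by exact_mod_cast hgr
  subst hα'm
  obtain ⟨i, rfl⟩ := pc.exists_label v
  rw [pc.rank_eq] at hv
  have hILt := i.isLt
  have h1 : min i.val (2 * m - 1 - i.val) ≤ 2 * m - 1 - i.val := min_le_right _ _
  have h2 : min i.val (2 * m - 1 - i.val) ≤ i.val := min_le_left _ _
  have h3 := min_choice i.val (2 * m - 1 - i.val)
  have hvm : min i.val (2 * m - 1 - i.val) + 1 = m := by exact_mod_cast hv
  have hi : i.val = m - 1 ∨ i.val = m := by omega
  have hstage : stage G (m - 1) = seg f (m - 2) := by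
    have : m - 1 = (m - 2) + 1 := by omega
    rw [this, pc.stage_eq, Nat.min_eq_left (by omega)]
  rw [hstage] at hdom
  rcases hi with hi | hi
  · have hz : f ⟨m + 1, by omega⟩ ∈ seg f (m - 2) := by
      rw [pc.mem_seg]
      simp only [Fin.val_mk]
      omega
    rcases hdom _ hz with h | h
    · rw [pc.f_inj_iff] at h
      simp only [Fin.val_mk] at h
      omega
    · rw [pc.adj] at h
      simp only [Fin.val_mk] at h
      omega
  · have hz : f ⟨m - 2, by omega⟩ ∈ seg f (m - 2) := by
      rw [pc.mem_seg]
      simp only [Fin.val_mk]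
      omega
    rcases hdom _ hz with h | h
    · rw [pc.f_inj_iff] at h
      simp only [Fin.val_mk] at h
      omega
    · rw [pc.adj] at h
      simp only [Fin.val_mk] at h
      omega

lemma realizes (pc : PathCtx G m f) : Realizes G (List.replicate m 2) := by
  refine ⟨pc.copwin, ?_, ?_⟩
  · rw [List.length_replicate]
    exact pc.graphRank_eq
  · intro i
    have hi : i.val < m := by
      have := i.isLt
      simpa using this
    have hlen : (List.replicate m 2).length = m := List.length_replicate
    rw [List.get_eq_getElem, List.getElem_replicate]
    have harg : (List.replicate (α := ℕ) m 2).length - i.val = (m - i.val - 1) + 1 := by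
      omega
    rw [harg, pc.class_ncard (by omega)]

lemma rrealizes0 (pc : PathCtx G m f) : RRealizes G 0 (List.replicate m 2) :=
  ⟨pc.realizes, iff_of_false pc.not_tp1 (by norm_num)⟩

end PathCtx

lemma pathGraph_pathCtx (α : ℕ) (hα : 2 ≤ α) :
    PathCtx (SimpleGraph.pathGraph (2 * α)) α id where
  hm := hα
  inj := Function.injective_id
  rng := Set.range_id
  adj := fun i j => SimpleGraph.pathGraph_adj

end CopsRobbers
namespace CopsRobbers

variable {W : Type*}

lemma enat_le_succ_cases {k : ℕ} {x : ℕ∞} :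
    (k : ℕ∞) ≤ x ↔ (x = (k : ℕ∞) ∨ ((k + 1 : ℕ) : ℕ∞) ≤ x) := by
  induction x using ENat.recTopCoe with
  | top =>
    simp
  | coe n =>
    rw [Nat.cast_le, Nat.cast_le, Nat.cast_inj]
    omega

/-- The key extraction: stage sets and strict corner sets of a graph whose rank
classes `1, …, α` all have two elements. -/
lemma extract {G : SimpleGraph W} {α : ℕ} (hα : 2 ≤ α)
    (hgr : graphRank G = (α : ℕ∞))
    (hcard : ∀ k : ℕ, 1 ≤ k → k ≤ α → {v | cornerRank G v = (k : ℕ∞)}.ncard = 2) :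
    (∀ k, 1 ≤ k → k ≤ α → stage G k = {v | (k : ℕ∞) ≤ cornerRank G v}) ∧
    (∀ k, 1 ≤ k → k < α →
      {v | StrictCorner G (stage G k) v} = {v | cornerRank G v = (k : ℕ∞)}) := by
  have hXα : {v | cornerRank G v = (α : ℕ∞)}.Nonempty := by
    apply Set.nonempty_of_ncard_ne_zero
    rw [hcard α (by omega) le_rfl]
    omega
  obtain ⟨vtop, hvtop⟩ := hXα
  have hvtop' : cornerRank G vtop = (α : ℕ∞) := hvtop
  have hcorners : ∀ k, 1 ≤ k → k < α →
      stage G k = {v | (k : ℕ∞) ≤ cornerRank G v} →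
      {v | StrictCorner G (stage G k) v} = {v | cornerRank G v = (k : ℕ∞)} := by
    intro k hk1 hkα hst
    ext v
    simp only [Set.mem_setOf_eq]
    constructor
    · intro hc
      apply le_antisymm
      · exact cornerRank_le_of_mem ⟨k, rfl, hk1, Or.inl hc⟩
      · have hv : v ∈ stage G k := hc.1
        rw [hst] at hv
        exact hv
    · intro hrk
      have hmem := cornerRank_mem G v (by rw [hrk]; exact ENat.coe_ne_top k)
      rw [hrk] at hmem
      obtain ⟨n, hn, hn1, hP⟩ := hmem
      have hnk : n = k := by exact_mod_cast hn.symm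
      rw [hnk] at hP
      rcases hP with hc | ⟨hcl, hvs⟩
      · exact hc
      · exfalso
        have hvt : vtop ∈ stage G k := by
          rw [hst]
          show (k : ℕ∞) ≤ cornerRank G vtop
          rw [hvtop']
          exact_mod_cast Nat.cast_le.2 (le_of_lt hkα)
        have hle : cornerRank G vtop ≤ (k : ℕ∞) :=
          cornerRank_le_of_mem ⟨k, rfl, hk1, Or.inr ⟨hcl, hvt⟩⟩
        rw [hvtop'] at hle
        have : α ≤ k := by exact_mod_cast hle
        omega
  have hstage : ∀ k, 1 ≤ k → k ≤ α → stage G k = {v | (k : ℕ∞) ≤ cornerRank G v} := by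
    intro k
    induction k with
    | zero => intro h1 _; exact absurd h1 (by omega)
    | succ k ih =>
      intro h1 h2
      by_cases hk0 : k = 0
      · subst hk0
        rw [stage_one]
        ext v
        simp only [Set.mem_univ, Set.mem_setOf_eq, true_iff]
        have := one_le_cornerRank G v
        exact_mod_cast this
      · have hk1 : 1 ≤ k := by omega
        have hkα : k < α := by omega
        have hst := ih hk1 (by omega)
        rw [stage_succ G k hk1, hcorners k hk1 hkα hst, hst]
        ext v
        simp only [Set.mem_diff, Set.mem_setOf_eq]
        constructor
        · rintro ⟨hle, hne⟩
          rcases enat_le_succ_cases.1 hle with h | h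
          · exact absurd h hne
          · exact h
        · intro h
          refine ⟨(Nat.cast_le.2 (by omega)).trans h, ?_⟩
          intro he
          rw [he] at h
          have : k + 1 ≤ k := by exact_mod_cast h
          omega
  exact ⟨hstage, fun k h1 h2 => hcorners k h1 h2 (hstage k h1 (le_of_lt h2))⟩

/-- The top rank class is an adjacent pair. -/
lemma top_pair {G : SimpleGraph W} {α : ℕ} (hα : 2 ≤ α)
    (hgr : graphRank G = (α : ℕ∞))
    (hcard : ∀ k : ℕ, 1 ≤ k → k ≤ α → {v | cornerRank G v = (k : ℕ∞)}.ncard = 2)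
    (hstage : stage G α = {v | (α : ℕ∞) ≤ cornerRank G v}) :
    ∃ a b : W, a ≠ b ∧ stage G α = {a, b} ∧ G.Adj a b := by
  have hrle : ∀ v, cornerRank G v ≤ (α : ℕ∞) := fun v => hgr ▸ le_iSup (cornerRank G) v
  have hXeq : stage G α = {v | cornerRank G v = (α : ℕ∞)} := by
    rw [hstage]
    ext v
    simp only [Set.mem_setOf_eq]
    exact ⟨fun h => le_antisymm (hrle v) h, fun h => le_of_eq h.symm⟩
  obtain ⟨a, b, hab, hset⟩ := Set.ncard_eq_two.1 (hcard α (by omega) le_rfl)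
  refine ⟨a, b, hab, by rw [hXeq, hset], ?_⟩
  by_contra hnadj
  have hrka : cornerRank G a = (α : ℕ∞) := by
    have : a ∈ {v | cornerRank G v = (α : ℕ∞)} := by rw [hset]; exact Set.mem_insert a _
    exact this
  have hmem := cornerRank_mem G a (by rw [hrka]; exact ENat.coe_ne_top α)
  rw [hrka] at hmem
  obtain ⟨n, hn, hn1, hP⟩ := hmem
  have hnα : n = α := by exact_mod_cast hn.symm
  subst hnα
  have hstab : stage G n = {a, b} := by rw [hXeq, hset]
  rcases hP with ⟨-, w, hwm, hwne, hss⟩ | ⟨hcl, -⟩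
  · rw [hstab] at hwm hss
    rw [Set.mem_insert_iff, Set.mem_singleton_iff] at hwm
    have hwb : w = b := by
      rcases hwm with h | h
      · exact absurd h hwne
      · exact h
    rw [hwb] at hss
    have hNa : closedNbhd G {a, b} a = {a} := by
      ext x
      rw [mem_closedNbhd]
      simp only [Set.mem_insert_iff, Set.mem_singleton_iff]
      constructor
      · rintro ⟨hx, h | h⟩
        · exact h
        · rcases hx with rfl | rfl
          · rfl
          · exact absurd h.symm hnadj
      · rintro rfl
        exact ⟨Or.inl rfl, Or.inl rfl⟩
    have hNb : closedNbhd G {a, b} b = {b} := by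
      ext x
      rw [mem_closedNbhd]
      simp only [Set.mem_insert_iff, Set.mem_singleton_iff]
      constructor
      · rintro ⟨hx, h | h⟩
        · exact h
        · rcases hx with rfl | rfl
          · exact absurd h hnadj
          · rfl
      · rintro rfl
        exact ⟨Or.inr rfl, Or.inl rfl⟩
    rw [hNa, hNb] at hss
    have := hss.1 rfl
    exact hab this
  · rw [hstab] at hcl
    exact hnadj (hcl (Set.mem_insert a _) (Set.mem_insert_of_mem a rfl) hab)

lemma IsPathLabeling.fcast {G : SimpleGraph W} {S : Set W} {n n' : ℕ} {u : Fin n → W}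
    (h : IsPathLabeling G S u) (e : n' = n) : IsPathLabeling G S (u ∘ Fin.cast e) := by
  subst e
  exact h

end CopsRobbers
namespace CopsRobbers

variable {W : Type*}

lemma iso_of_labeling {G : SimpleGraph W} {N : ℕ} {u : Fin N → W}
    (h : IsPathLabeling G Set.univ u) : Nonempty (G ≃g SimpleGraph.pathGraph N) := by
  have hsurj : Function.Surjective u := fun z => by
    have : z ∈ Set.range u := by rw [h.2.1]; exact Set.mem_univ z
    exact this
  have hb : Function.Bijective u := ⟨h.1, hsurj⟩
  let e := Equiv.ofBijective u hb
  refine ⟨⟨e.symm, fun {a b} => ?_⟩⟩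
  obtain ⟨i, rfl⟩ := hsurj a
  obtain ⟨j, rfl⟩ := hsurj b
  have h1 : e.symm (u i) = i := by
    apply e.injective
    simp [e]
  have h2 : e.symm (u j) = j := by
    apply e.injective
    simp [e]
  rw [h1, h2, SimpleGraph.pathGraph_adj, h.2.2]

lemma build_labeling {G : SimpleGraph W} {α : ℕ} (hα : 2 ≤ α)
    (hgr : graphRank G = (α : ℕ∞))
    (hcard : ∀ k : ℕ, 1 ≤ k → k ≤ α → {v | cornerRank G v = (k : ℕ∞)}.ncard = 2)
    (htp0 : ∀ v, cornerRank G v = (α : ℕ∞) → ¬ Dominates G v (stage G (α - 1))) :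
    ∃ u : Fin (2 * α) → W, IsPathLabeling G Set.univ u := by
  obtain ⟨hstage, hcorners⟩ := extract hα hgr hcard
  obtain ⟨a, b, hab, hstab, hadj⟩ := top_pair hα hgr hcard (hstage α (by omega) le_rfl)
  have claim : ∀ j, j ≤ α - 1 →
      ∃ u : Fin (2 * (j + 1)) → W, IsPathLabeling G (stage G (α - j)) u := by
    intro j
    induction j with
    | zero =>
      intro _
      have h0 : α - 0 = α := by omega
      rw [h0, hstab]
      refine ⟨fun i => if i.val = 0 then a else b, ?_, ?_, ?_⟩
      · intro i1 i2 h
        have hi1 := i1.isLt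
        have hi2 := i2.isLt
        apply Fin.ext
        simp only at h
        split_ifs at h with q1 q2 q3
        · omega
        · exact absurd h hab
        · exact absurd h.symm hab
        · omega
      · apply Set.Subset.antisymm
        · rintro z ⟨i, rfl⟩
          simp only
          split_ifs
          · exact Set.mem_insert a _
          · exact Set.mem_insert_of_mem a rfl
        · rintro z (rfl | rfl)
          · exact ⟨⟨0, by omega⟩, by simp⟩
          · exact ⟨⟨1, by omega⟩, by simp⟩
      · intro i j
        have hi := i.isLt
        have hj := j.isLt
        simp only
        split_ifs with q1 q2 q3
        · constructor
          · intro hadj2; exact absurd hadj2 (G.irrefl)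
          · intro h; omega
        · constructor
          · intro _; omega
          · intro _; exact hadj
        · constructor
          · intro _; omega
          · intro _; exact hadj.symm
        · constructor
          · intro hadj2; exact absurd hadj2 (G.irrefl)
          · intro h; omega
    | succ j ih =>
      intro hj1
      obtain ⟨u, hu⟩ := ih (by omega)
      have hk1 : 1 ≤ α - (j + 1) := by omega
      have hkα : α - (j + 1) < α := by omega
      have hkj : α - j = (α - (j + 1)) + 1 := by omega
      rw [hkj] at hu
      set k := α - (j + 1) with hkdef
      obtain ⟨c, d, hcd, hset⟩ := Set.ncard_eq_two.1 (hcard k hk1 (by omega))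
      have hrkc : cornerRank G c = (k : ℕ∞) := by
        have : c ∈ ({c, d} : Set W) := Set.mem_insert c _
        rw [← hset] at this
        exact this
      have hrkd : cornerRank G d = (k : ℕ∞) := by
        have : d ∈ ({c, d} : Set W) := Set.mem_insert_of_mem c rfl
        rw [← hset] at this
        exact this
      have hTdef := hstage (k + 1) (by omega) (by omega)
      have hSdef := hstage k hk1 (by omega)
      have hnotin : ∀ x, cornerRank G x = (k : ℕ∞) → x ∉ stage G (k + 1) := by
        intro x hx hmem
        rw [hTdef] at hmem
        have hmem' : ((k + 1 : ℕ) : ℕ∞) ≤ cornerRank G x := hmem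
        rw [hx] at hmem'
        have : k + 1 ≤ k := by exact_mod_cast hmem'
        omega
      have ctx : StepCtx G (stage G (k + 1)) u c d (stage G k) :=
        { inj := hu.1
          rng := hu.2.1
          adj := hu.2.2
          hc := hnotin c hrkc
          hd := hnotin d hrkd
          hcd := hcd
          hS := by
            rw [hSdef, hTdef, ← hset]
            ext v
            simp only [Set.mem_setOf_eq, Set.mem_union]
            rw [enat_le_succ_cases]
            tauto
          hcor := by
            intro v
            have h := hcorners k hk1 hkα
            rw [hset] at h
            have := Set.ext_iff.1 h v
            simpa using this }
      have hstep : ∃ w : Fin (2 * (j + 1) + 2) → W, IsPathLabeling G (stage G k) w := by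
        by_cases hj0 : j = 0
        · subst hj0
          apply ctx.step_base (by norm_num)
          intro i
          have hmem : u i ∈ stage G (k + 1) := by
            rw [← hu.2.1]
            exact Set.mem_range_self i
          have hrk : cornerRank G (u i) = (α : ℕ∞) := by
            rw [hTdef] at hmem
            have h1 : ((k + 1 : ℕ) : ℕ∞) ≤ cornerRank G (u i) := hmem
            have h2 : cornerRank G (u i) ≤ (α : ℕ∞) := hgr ▸ le_iSup (cornerRank G) (u i)
            have hkα2 : k + 1 = α := by omega
            rw [hkα2] at h1
            exact le_antisymm h2 h1
          have hk2 : k = α - 1 := by omega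
          rw [hk2]
          exact htp0 (u i) hrk
        · exact ctx.step_extend (by omega)
      obtain ⟨w, hw⟩ := hstep
      exact ⟨w ∘ Fin.cast (by omega), hw.fcast (by omega)⟩
  obtain ⟨u, hu⟩ := claim (α - 1) le_rfl
  have h1 : α - (α - 1) = 1 := by omega
  rw [h1, stage_one] at hu
  exact ⟨u ∘ Fin.cast (by omega), hu.fcast (by omega)⟩

end CopsRobbers

/-- for `α ≥ 2`, the vector `(2, …, 2)` of length `α` is uniquely 0-realized
by the path on `2α` vertices. -/
theorem CopsRobbers.twos_uniquely_zero_realized_by_path (α : ℕ) (hα : 2 ≤ α) :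
    CopsRobbers.RRealizes (SimpleGraph.pathGraph (2 * α)) 0 (List.replicate α 2) ∧
    ∀ (W : Type) (_ : Fintype W) (G : SimpleGraph W),
      CopsRobbers.RRealizes G 0 (List.replicate α 2) →
      Nonempty (G ≃g SimpleGraph.pathGraph (2 * α)) := by
  constructor
  · exact (CopsRobbers.pathGraph_pathCtx α hα).rrealizes0
  · rintro W _ G ⟨⟨hcw, hgr, hcnt⟩, htp⟩
    have hL : (List.replicate (α := ℕ) α 2).length = α := by simp
    rw [hL] at hgr
    have hcard : ∀ k : ℕ, 1 ≤ k → k ≤ α → {v | cornerRank G v = (k : ℕ∞)}.ncard = 2 := by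
      intro k h1 h2
      have hidx : α - k < (List.replicate (α := ℕ) α 2).length := by rw [hL]; omega
      have hval := hcnt ⟨α - k, hidx⟩
      rw [List.get_eq_getElem, List.getElem_replicate] at hval
      have harg : (List.replicate (α := ℕ) α 2).length -
          ((⟨α - k, hidx⟩ : Fin (List.replicate (α := ℕ) α 2).length) : ℕ) = k := by
        simp only [Fin.val_mk]
        omega
      rw [harg] at hval
      exact hval.symm
    have htp0 : ∀ v, cornerRank G v = (α : ℕ∞) → ¬ Dominates G v (stage G (α - 1)) := by
      intro v hv hdom
      have h1 : Tp1 G := ⟨α, hα, hgr, v, hv, hdom⟩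
      rw [htp] at h1
      omega
    obtain ⟨u, hu⟩ := CopsRobbers.build_labeling hα hgr hcard htp0
    exact CopsRobbers.iso_of_labeling hu
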